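/- Consider a Galton-Watson tree with Poisson(d) offspring distribution. Let P_{2ℓ,k} be the number of pairs of distinct vertices at depth k whose graph distance in the tree is exactly 2ℓ (equivalently, paths of length 2ℓ between depth-k leaves). Then E[P_{2ℓ,k}] = d^{k+ℓ} for 1 ≤ ℓ ≤ k. -/

import Mathlib

open MeasureTheory ProbabilityTheory

/-- A vertex of the (infinite-index) Galton–Watson tree is a finite string of naturals;
`v` belongs to the tree in sample `ω` if every coordinate is below the number of children
of the corresponding prefix. -/
def memTree {Ω : Type*} (N : List ℕ → Ω → ℕ) (ω : Ω) (v : List ℕ) : Prop :=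
  ∀ l a, l ++ [a] <+: v → a < N l ω

namespace GW8

open Finset
open scoped ENNReal

noncomputable def pois (d : ℝ) (n : ℕ) : ℝ≥0∞ :=
  ENNReal.ofReal (Real.exp (-d) * d ^ n / n.factorial)

lemma tsum_prod_antidiag (g : ℕ × ℕ → ℝ≥0∞) :
    ∑' p : ℕ × ℕ, g p = ∑' n, ∑ p ∈ Finset.HasAntidiagonal.antidiagonal n, g p := by
  rw [← Finset.HasAntidiagonal.sigmaAntidiagonalEquivProd.tsum_eq g, ENNReal.tsum_sigma']
  exact tsum_congr fun n => by
    rw [tsum_fintype, ← Finset.sum_coe_sort (Finset.HasAntidiagonal.antidiagonal n) g]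
    exact Finset.sum_congr rfl fun p _ => by simp [Finset.HasAntidiagonal.sigmaAntidiagonalEquivProd]

lemma tsum_add_eq (f : ℕ → ℝ≥0∞) :
    ∑' p : ℕ × ℕ, f (p.1 + p.2) = ∑' (n : ℕ), ((n : ℝ≥0∞) + 1) * f n := by
  rw [tsum_prod_antidiag]
  refine tsum_congr fun n => ?_
  rw [Finset.sum_congr rfl (fun p hp => by rw [Finset.HasAntidiagonal.mem_antidiagonal.mp hp]),
    Finset.sum_const, Nat.card_antidiagonal, nsmul_eq_mul]
  push_cast; ring

lemma tsum_weighted_eq (f : ℕ → ℝ≥0∞) :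
    ∑' p : ℕ × ℕ, ((p.1 : ℝ≥0∞) + 1) * f (p.1 + p.2) =
      ∑' (n : ℕ), (∑ i ∈ range (n + 1), ((i : ℝ≥0∞) + 1)) * f n := by
  rw [tsum_prod_antidiag]
  refine tsum_congr fun n => ?_
  rw [Finset.sum_congr rfl (fun p hp => by rw [Finset.HasAntidiagonal.mem_antidiagonal.mp hp]),
    ← Finset.sum_mul, Nat.sum_antidiagonal_eq_sum_range_succ_mk]

lemma pois_rec {d : ℝ} (hd : 0 < d) (n : ℕ) :
    ((n : ℝ≥0∞) + 1) * pois d (n + 1) = ENNReal.ofReal d * pois d n := by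
  unfold pois
  have h1 : (n : ℝ≥0∞) + 1 = ENNReal.ofReal ((n : ℝ) + 1) := by
    rw [ENNReal.ofReal_add (by positivity) zero_le_one, ENNReal.ofReal_natCast,
      ENNReal.ofReal_one]
  rw [h1, ← ENNReal.ofReal_mul (by positivity), ← ENNReal.ofReal_mul hd.le]
  congr 1
  have hf : ((n.factorial : ℝ)) ≠ 0 := Nat.cast_ne_zero.mpr (Nat.factorial_pos n).ne' -- fix below
  rw [Nat.factorial_succ]
  push_cast
  field_simp
  ring


section
variable {d : ℝ} (hd : 0 < d) (hsum : ∑' n, pois d n = 1)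
include hd hsum

lemma tsum_mul_pois : ∑' (n : ℕ), ((n : ℝ≥0∞) + 1) * pois d (n + 1) = ENNReal.ofReal d := by
  calc ∑' (n : ℕ), ((n : ℝ≥0∞) + 1) * pois d (n + 1)
      = ∑' (n : ℕ), ENNReal.ofReal d * pois d n := tsum_congr fun n => pois_rec hd n
    _ = ENNReal.ofReal d := by rw [ENNReal.tsum_mul_left, hsum, mul_one]

lemma sum_tail : ∑' (a : ℕ), ∑' (j : ℕ), pois d (j + (a + 1)) = ENNReal.ofReal d := by
  rw [← ENNReal.tsum_prod]
  calc ∑' p : ℕ × ℕ, pois d (p.2 + (p.1 + 1))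
      = ∑' p : ℕ × ℕ, pois d ((p.1 + p.2) + 1) := tsum_congr fun p => by
        rw [show p.2 + (p.1 + 1) = (p.1 + p.2) + 1 by omega]
    _ = ∑' (n : ℕ), ((n : ℝ≥0∞) + 1) * pois d (n + 1) := tsum_add_eq (fun n => pois d (n + 1))
    _ = ENNReal.ofReal d := tsum_mul_pois hd hsum

omit hd hsum in
lemma natgauss (n : ℕ) : (∑ i ∈ range (n + 1), (i + 1)) * 2 = (n + 1) * (n + 2) := by
  induction n with
  | zero => rfl
  | succ n ih => rw [Finset.sum_range_succ, add_mul, ih]; ring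

lemma W_add_W :
    (∑' x : ℕ × ℕ, ((x.1 : ℝ≥0∞) + 1) * pois d (x.1 + x.2 + 2)) +
      (∑' x : ℕ × ℕ, ((x.1 : ℝ≥0∞) + 1) * pois d (x.1 + x.2 + 2)) =
      ENNReal.ofReal d * ENNReal.ofReal d := by
  have h1 : ∑' x : ℕ × ℕ, ((x.1 : ℝ≥0∞) + 1) * pois d (x.1 + x.2 + 2) =
      ∑' (n : ℕ), (∑ i ∈ range (n + 1), ((i : ℝ≥0∞) + 1)) * pois d (n + 2) :=
    tsum_weighted_eq (fun n => pois d (n + 2))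
  rw [h1, ← ENNReal.tsum_add]
  have h2 : ∀ n : ℕ, (∑ i ∈ range (n + 1), ((i : ℝ≥0∞) + 1)) * pois d (n + 2) +
      (∑ i ∈ range (n + 1), ((i : ℝ≥0∞) + 1)) * pois d (n + 2) =
      ENNReal.ofReal d * (ENNReal.ofReal d * pois d n) := by
    intro n
    have hc : (∑ i ∈ range (n + 1), ((i : ℝ≥0∞) + 1)) + (∑ i ∈ range (n + 1), ((i : ℝ≥0∞) + 1))
        = ((n : ℝ≥0∞) + 1) * (((n + 1 : ℕ) : ℝ≥0∞) + 1) := by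
      have h3 : (((∑ i ∈ range (n + 1), (i + 1)) * 2 : ℕ) : ℝ≥0∞) =
          (((n + 1) * (n + 2) : ℕ) : ℝ≥0∞) := by rw [natgauss]
      push_cast at h3
      calc (∑ i ∈ range (n + 1), ((i : ℝ≥0∞) + 1)) + (∑ i ∈ range (n + 1), ((i : ℝ≥0∞) + 1))
          = (∑ i ∈ range (n + 1), ((i : ℝ≥0∞) + 1)) * 2 := by rw [mul_two]
        _ = ((n : ℝ≥0∞) + 1) * ((n : ℝ≥0∞) + 2) := h3
        _ = ((n : ℝ≥0∞) + 1) * (((n + 1 : ℕ) : ℝ≥0∞) + 1) := by push_cast; ring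
    rw [← add_mul, hc, mul_assoc, pois_rec hd (n + 1), ← mul_assoc,
      mul_comm ((n : ℝ≥0∞) + 1) (ENNReal.ofReal d), mul_assoc, pois_rec hd n]
  calc ∑' (n : ℕ), ((∑ i ∈ range (n + 1), ((i : ℝ≥0∞) + 1)) * pois d (n + 2) +
        (∑ i ∈ range (n + 1), ((i : ℝ≥0∞) + 1)) * pois d (n + 2))
      = ∑' (n : ℕ), ENNReal.ofReal d * (ENNReal.ofReal d * pois d n) := tsum_congr h2
    _ = ENNReal.ofReal d * ENNReal.ofReal d := by
        rw [ENNReal.tsum_mul_left, ENNReal.tsum_mul_left, hsum, mul_one]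

end

lemma tsum_pi_pow (f : ℕ → ℝ≥0∞) : ∀ m, (∑' v : Fin m → ℕ, ∏ i, f (v i)) = (∑' n, f n) ^ m
  | 0 => by
    simp only [pow_zero]
    rw [tsum_eq_single (fun i => i.elim0) (by intro v hv; exact absurd (funext fun i => i.elim0) hv)]
    simp
  | (m + 1) => by
    rw [← (Fin.consEquiv (fun _ => ℕ)).tsum_eq, pow_succ]
    calc ∑' p : ℕ × (Fin m → ℕ), ∏ i, f (((Fin.consEquiv (fun _ => ℕ)) p) i)
        = ∑' p : ℕ × (Fin m → ℕ), f p.1 * ∏ i, f (p.2 i) := tsum_congr fun p => by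
          simp [Fin.consEquiv, Fin.prod_univ_succ]
      _ = ∑' (a : ℕ), ∑' (w : Fin m → ℕ), f a * ∏ i, f (w i) := ENNReal.tsum_prod (f := fun (a : ℕ) (w : Fin m → ℕ) => f a * ∏ i, f (w i))
      _ = (∑' n, f n) * (∑' v : Fin m → ℕ, ∏ i, f (v i)) := by
          simp_rw [ENNReal.tsum_mul_left]
          rw [ENNReal.tsum_mul_right]
      _ = (∑' n, f n) ^ m * (∑' n, f n) := by rw [tsum_pi_pow f m]; ring

lemma Hs {d : ℝ} (c : ℕ) :
    ∑' (x : ℕ × ℕ), ∑' (j : ℕ), pois d (j + (x.1 + x.2 + c)) =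
      ∑' (x : ℕ × ℕ), ((x.1 : ℝ≥0∞) + 1) * pois d (x.1 + x.2 + c) := by
  rw [ENNReal.tsum_prod (f := fun a n => ∑' (j : ℕ), pois d (j + (a + n + c)))]
  have inner : ∀ a : ℕ, (∑' (n : ℕ), ∑' (j : ℕ), pois d (j + (a + n + c))) =
      ∑' (s : ℕ), ((s : ℝ≥0∞) + 1) * pois d (s + a + c) := by
    intro a
    rw [← ENNReal.tsum_prod (f := fun n j => pois d (j + (a + n + c)))]
    calc ∑' (p : ℕ × ℕ), pois d (p.2 + (a + p.1 + c))
        = ∑' (p : ℕ × ℕ), pois d ((p.1 + p.2) + (a + c)) := tsum_congr fun p => by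
          rw [show p.2 + (a + p.1 + c) = (p.1 + p.2) + (a + c) by omega]
      _ = ∑' (s : ℕ), ((s : ℝ≥0∞) + 1) * pois d (s + (a + c)) :=
          tsum_add_eq (fun s => pois d (s + (a + c)))
      _ = ∑' (s : ℕ), ((s : ℝ≥0∞) + 1) * pois d (s + a + c) := tsum_congr fun s => by
          rw [show s + (a + c) = s + a + c by omega]
  calc ∑' (a : ℕ), ∑' (n : ℕ), ∑' (j : ℕ), pois d (j + (a + n + c))
      = ∑' (a : ℕ), ∑' (s : ℕ), ((s : ℝ≥0∞) + 1) * pois d (s + a + c) := tsum_congr inner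
    _ = ∑' (s : ℕ), ∑' (a : ℕ), ((s : ℝ≥0∞) + 1) * pois d (s + a + c) := ENNReal.tsum_comm
    _ = ∑' (x : ℕ × ℕ), ((x.1 : ℝ≥0∞) + 1) * pois d (x.1 + x.2 + c) :=
        (ENNReal.tsum_prod (f := fun (s a : ℕ) => ((s : ℝ≥0∞) + 1) * pois d (s + a + c))).symm

/-- parametrization of strictly increasing pairs -/
def eLT : ℕ × ℕ ≃ ↥{pr : ℕ × ℕ | pr.1 < pr.2} where
  toFun x := ⟨(x.1, x.1 + x.2 + 1), by simp only [Set.mem_setOf_eq]; omega⟩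
  invFun y := (y.val.1, y.val.2 - y.val.1 - 1)
  left_inv x := by
    obtain ⟨a, b⟩ := x
    have : a + b + 1 - a - 1 = b := by omega
    simp [this]
  right_inv y := by
    have := y.prop
    simp only [Set.mem_setOf_eq] at this
    ext <;> simp <;> omega

def eGT : ℕ × ℕ ≃ ↥{pr : ℕ × ℕ | pr.2 < pr.1} where
  toFun x := ⟨(x.1 + x.2 + 1, x.1), by simp only [Set.mem_setOf_eq]; omega⟩
  invFun y := (y.val.2, y.val.1 - y.val.2 - 1)
  left_inv x := by
    obtain ⟨a, b⟩ := x
    have : a + b + 1 - a - 1 = b := by omega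
    simp [this]
  right_inv y := by
    have := y.prop
    simp only [Set.mem_setOf_eq] at this
    ext <;> simp <;> omega

lemma S2 {d : ℝ} (hd : 0 < d) (hsum : ∑' n, pois d n = 1) :
    ∑' (x : {pr : ℕ × ℕ // pr.1 ≠ pr.2}), (∑' (j : ℕ), pois d (j + (max x.val.1 x.val.2 + 1)))
      = ENNReal.ofReal d * ENNReal.ofReal d := by
  have hset : {pr : ℕ × ℕ | pr.1 ≠ pr.2} =
      {pr : ℕ × ℕ | pr.1 < pr.2} ∪ {pr : ℕ × ℕ | pr.2 < pr.1} := by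
    ext pr; simp only [Set.mem_setOf_eq, Set.mem_union]; omega
  have h0 : ∑' (x : {pr : ℕ × ℕ // pr.1 ≠ pr.2}),
      (∑' (j : ℕ), pois d (j + (max x.val.1 x.val.2 + 1))) =
      ∑' (x : ↥({pr : ℕ × ℕ | pr.1 < pr.2} ∪ {pr : ℕ × ℕ | pr.2 < pr.1})),
      (∑' (j : ℕ), pois d (j + (max x.val.1 x.val.2 + 1))) := by
    exact tsum_congr_set_coe (fun pr : ℕ × ℕ => ∑' (j : ℕ), pois d (j + (max pr.1 pr.2 + 1))) hset
  rw [h0, ENNReal.summable.tsum_union_disjoint (f := fun pr : ℕ × ℕ => ∑' (j : ℕ), pois d (j + (max pr.1 pr.2 + 1)))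
    (by rw [Set.disjoint_left]; intro pr h1 h2; simp only [Set.mem_setOf_eq] at h1 h2; omega)
    ENNReal.summable]
  have hb1 : ∑' (x : ↥{pr : ℕ × ℕ | pr.1 < pr.2}),
      (∑' (j : ℕ), pois d (j + (max x.val.1 x.val.2 + 1))) =
      ∑' (x : ℕ × ℕ), ((x.1 : ℝ≥0∞) + 1) * pois d (x.1 + x.2 + 2) := by
    rw [← eLT.tsum_eq]
    rw [← Hs 2]
    refine tsum_congr fun x => ?_
    congr 1
    funext j
    congr 1
    simp only [eLT, Equiv.coe_fn_mk]
    omega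
  have hb2 : ∑' (x : ↥{pr : ℕ × ℕ | pr.2 < pr.1}),
      (∑' (j : ℕ), pois d (j + (max x.val.1 x.val.2 + 1))) =
      ∑' (x : ℕ × ℕ), ((x.1 : ℝ≥0∞) + 1) * pois d (x.1 + x.2 + 2) := by
    rw [← eGT.tsum_eq]
    rw [← Hs 2]
    refine tsum_congr fun x => ?_
    congr 1
    funext j
    congr 1
    simp only [eGT, Equiv.coe_fn_mk]
    omega
  rw [hb1, hb2]
  exact W_add_W hd hsum

lemma memTree_iff {Ω : Type*} (N : List ℕ → Ω → ℕ) (ω : Ω) (u : List ℕ) :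
    memTree N ω u ↔ ∀ i (h : i < u.length), u[i] + 1 ≤ N (u.take i) ω := by
  constructor
  · intro h i hi
    refine h (u.take i) u[i] ?_
    have h1 : u.take i ++ [u[i]] = u.take (i + 1) := by
      rw [List.take_succ, List.getElem?_eq_getElem hi]
      rfl
    rw [h1]
    exact List.take_prefix _ _
  · intro h l a hla
    have hlen : l.length < u.length := by
      have := hla.length_le
      simp at this; omega
    have hpre : l <+: u := ((l.prefix_append [a]).trans hla)
    have ha : a = u[l.length] := by
      have h1 : (l ++ [a])[l.length] = a := List.getElem_concat_length rfl (by simp)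
      rw [← h1]
      exact hla.getElem (by simp)
    have hl : l = u.take l.length := List.prefix_iff_eq_take.mp hpre
    rw [ha]
    have := h l.length hlen
    rwa [← hl] at this

variable {Ω : Type*} [MeasurableSpace Ω] {μ : Measure Ω} {N : List ℕ → Ω → ℕ}

lemma measure_pair (hNindep : iIndepFun N μ)
    (q : ℕ → ℝ≥0∞) (htail : ∀ v c, μ {ω | c ≤ N v ω} = q c)
    (k m : ℕ) (hm : m < k) (u v : List ℕ) (hu : u.length = k) (hv : v.length = k)
    (hagree : u.take m = v.take m)
    (hdiff : u.getD m 0 ≠ v.getD m 0) :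
    μ {ω | memTree N ω u ∧ memTree N ω v} =
      ((∏ i ∈ range m, q (u.getD i 0 + 1)) * q (max (u.getD m 0) (v.getD m 0) + 1)) *
        ((∏ i ∈ Ico (m + 1) k, q (u.getD i 0 + 1)) *
          (∏ i ∈ Ico (m + 1) k, q (v.getD i 0 + 1))) := by
  classical
  set φ : List ℕ → List ℕ → ℕ := fun x l =>
    if l <+: x ∧ l.length < x.length then x.getD l.length 0 + 1 else 0 with hφ
  set g : List ℕ → ℕ := fun l => max (φ u l) (φ v l) with hg
  set F : Finset (List ℕ) :=
    ((range k).image (fun i => u.take i)) ∪ ((range k).image (fun i => v.take i)) with hF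
  -- basic take facts
  have hlen_take_u : ∀ i, i ≤ k → (u.take i).length = i := fun i hi => by
    rw [List.length_take, hu]; omega
  have hlen_take_v : ∀ i, i ≤ k → (v.take i).length = i := fun i hi => by
    rw [List.length_take, hv]; omega
  have hagree' : ∀ i, i ≤ m → u.take i = v.take i := by
    intro i hi
    have h1 : u.take i = (u.take m).take i := by rw [List.take_take, min_eq_left hi]
    have h2 : v.take i = (v.take m).take i := by rw [List.take_take, min_eq_left hi]
    rw [h1, h2, hagree]
  -- φ values
  have hφu : ∀ i, i < k → φ u (u.take i) = u.getD i 0 + 1 := by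
    intro i hi
    rw [hφ]
    simp only
    rw [if_pos ⟨List.take_prefix _ _, by rw [hlen_take_u i hi.le, hu]; exact hi⟩,
      hlen_take_u i hi.le]
  have hφv : ∀ i, i < k → φ v (v.take i) = v.getD i 0 + 1 := by
    intro i hi
    rw [hφ]
    simp only
    rw [if_pos ⟨List.take_prefix _ _, by rw [hlen_take_v i hi.le, hv]; exact hi⟩,
      hlen_take_v i hi.le]
  -- step 1 : event as finite intersection
  have key : ∀ (x : List ℕ) ω, memTree N ω x → ∀ l, φ x l ≤ N l ω := by
    intro x ω hx l
    rw [hφ]; simp only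
    split_ifs with hc
    · obtain ⟨hp, hlt⟩ := hc
      have := (memTree_iff N ω x).mp hx l.length hlt
      rw [← List.prefix_iff_eq_take.mp hp] at this
      rwa [List.getD_eq_getElem x 0 hlt]
    · exact Nat.zero_le _
  have step1 : {ω | memTree N ω u ∧ memTree N ω v} = ⋂ l ∈ F, {ω | g l ≤ N l ω} := by
    ext ω
    simp only [Set.mem_setOf_eq, Set.mem_iInter]
    constructor
    · rintro ⟨h1, h2⟩ l _
      exact max_le (key u ω h1 l) (key v ω h2 l)
    · intro h
      constructor
      · rw [memTree_iff]
        intro i hi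
        have hik : i < k := by omega
        have hmem : u.take i ∈ F := by
          rw [hF]
          exact Finset.mem_union_left _ (Finset.mem_image.mpr ⟨i, Finset.mem_range.mpr hik, rfl⟩)
        have := h _ hmem
        have h2 : φ u (u.take i) ≤ N (u.take i) ω := le_trans (le_max_left _ _) this
        rwa [hφu i hik, List.getD_eq_getElem u 0 hi] at h2
      · rw [memTree_iff]
        intro i hi
        have hik : i < k := by omega
        have hmem : v.take i ∈ F := by
          rw [hF]
          exact Finset.mem_union_right _ (Finset.mem_image.mpr ⟨i, Finset.mem_range.mpr hik, rfl⟩)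
        have := h _ hmem
        have h2 : φ v (v.take i) ≤ N (v.take i) ω := le_trans (le_max_right _ _) this
        rwa [hφv i hik, List.getD_eq_getElem v 0 hi] at h2
  -- step 2 : independence
  have step2 : μ (⋂ l ∈ F, {ω | g l ≤ N l ω}) = ∏ l ∈ F, μ {ω | g l ≤ N l ω} := by
    refine hNindep.meas_biInter fun l _ => ?_
    exact ⟨{x | g l ≤ x}, MeasurableSpace.measurableSet_top, rfl⟩
  -- step 3 : tails
  have step3 : ∏ l ∈ F, μ {ω | g l ≤ N l ω} = ∏ l ∈ F, q (g l) :=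
    Finset.prod_congr rfl fun l _ => htail l (g l)
  -- structure of F
  have hgetuv : ∀ i, i < m → u.getD i 0 = v.getD i 0 := by
    intro i hi
    have hiu : i < u.length := by omega
    have hiv : i < v.length := by omega
    rw [List.getD_eq_getElem u 0 hiu, List.getD_eq_getElem v 0 hiv]
    have h1 : (u.take m)[i]'(by rw [hlen_take_u m hm.le]; exact hi) =
        (v.take m)[i]'(by rw [hlen_take_v m hm.le]; exact hi) := by
      exact List.getElem_of_eq hagree _
    rwa [List.getElem_take, List.getElem_take] at h1
  have hdiffe : ∀ i, m < i → i ≤ k → ¬ (u.take i <+: v) := by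
    intro i hmi hik hpre
    have h1 : u.take i = v.take i := by
      have := List.prefix_iff_eq_take.mp hpre
      rwa [hlen_take_u i hik] at this
    have h2 : u.getD m 0 = v.getD m 0 := by
      have hmu : m < u.length := by omega
      have hmv : m < v.length := by omega
      rw [List.getD_eq_getElem u 0 hmu, List.getD_eq_getElem v 0 hmv]
      have h3 : (u.take i)[m]'(by rw [hlen_take_u i hik]; exact hmi) =
          (v.take i)[m]'(by rw [hlen_take_v i hik]; exact hmi) := List.getElem_of_eq h1 _
      rwa [List.getElem_take, List.getElem_take] at h3
    exact hdiff h2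
  have hdiffe' : ∀ i, m < i → i ≤ k → ¬ (v.take i <+: u) := by
    intro i hmi hik hpre
    have h1 : v.take i = u.take i := by
      have := List.prefix_iff_eq_take.mp hpre
      rwa [hlen_take_v i hik] at this
    exact hdiffe i hmi hik (h1 ▸ List.take_prefix i v)
  -- g on the three pieces
  have hg_shared : ∀ i, i < m → g (u.take i) = u.getD i 0 + 1 := by
    intro i hi
    have hik : i < k := by omega
    rw [hg]; simp only
    rw [hφu i hik]
    have : φ v (u.take i) = v.getD i 0 + 1 := by rw [hagree' i hi.le]; exact hφv i hik
    rw [this, hgetuv i hi, max_self]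
  have hg_mid : g (u.take m) = max (u.getD m 0) (v.getD m 0) + 1 := by
    rw [hg]; simp only
    rw [hφu m hm]
    have : φ v (u.take m) = v.getD m 0 + 1 := by rw [hagree' m le_rfl]; exact hφv m hm
    rw [this]
    exact Nat.succ_max_succ _ _
  have hg_u : ∀ i, m < i → i < k → g (u.take i) = u.getD i 0 + 1 := by
    intro i hmi hik
    rw [hg]; simp only
    rw [hφu i hik]
    have : φ v (u.take i) = 0 := by
      rw [hφ]; simp only
      rw [if_neg]
      rintro ⟨hp, -⟩
      exact hdiffe i hmi hik.le hp
    rw [this]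
    exact Nat.max_eq_left (Nat.zero_le _)
  have hg_v : ∀ i, m < i → i < k → g (v.take i) = v.getD i 0 + 1 := by
    intro i hmi hik
    rw [hg]; simp only
    rw [hφv i hik]
    have : φ u (v.take i) = 0 := by
      rw [hφ]; simp only
      rw [if_neg]
      rintro ⟨hp, -⟩
      exact hdiffe' i hmi hik.le hp
    rw [this]
    exact Nat.max_eq_right (Nat.zero_le _)
  -- decomposition of F
  set F0 : Finset (List ℕ) := (range (m + 1)).image (fun i => u.take i) with hF0
  set F1 : Finset (List ℕ) := (Ico (m + 1) k).image (fun i => u.take i) with hF1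
  set F2 : Finset (List ℕ) := (Ico (m + 1) k).image (fun i => v.take i) with hF2
  have hsplit : F = (F0 ∪ F1) ∪ F2 := by
    rw [hF, hF0, hF1, hF2]
    have hr : range k = range (m + 1) ∪ Ico (m + 1) k := by
      rw [Finset.range_eq_Ico, Finset.range_eq_Ico]
      exact (Finset.Ico_union_Ico_eq_Ico (Nat.zero_le _) hm).symm
    have hv0 : (range (m + 1)).image (fun i => v.take i) = F0 := by
      rw [hF0]
      refine Finset.image_congr fun i hi => ?_
      simp only [Finset.coe_range, Set.mem_Iio] at hi
      exact (hagree' i (by omega)).symm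
    rw [hr, Finset.image_union, Finset.image_union, hv0]
    ext l
    simp only [Finset.mem_union]
    tauto
  have hmemF0 : ∀ l ∈ F0, l.length ≤ m := by
    intro l hl
    rw [hF0] at hl
    obtain ⟨i, hi, rfl⟩ := Finset.mem_image.mp hl
    rw [Finset.mem_range] at hi
    rw [hlen_take_u i (by omega)]; omega
  have hmemF1 : ∀ l ∈ F1, m + 1 ≤ l.length ∧ l.length < k ∧ l = u.take l.length := by
    intro l hl
    rw [hF1] at hl
    obtain ⟨i, hi, rfl⟩ := Finset.mem_image.mp hl
    rw [Finset.mem_Ico] at hi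
    rw [hlen_take_u i (by omega)]
    exact ⟨hi.1, hi.2, rfl⟩
  have hmemF2 : ∀ l ∈ F2, m + 1 ≤ l.length ∧ l.length < k ∧ l = v.take l.length := by
    intro l hl
    rw [hF2] at hl
    obtain ⟨i, hi, rfl⟩ := Finset.mem_image.mp hl
    rw [Finset.mem_Ico] at hi
    rw [hlen_take_v i (by omega)]
    exact ⟨hi.1, hi.2, rfl⟩
  have hd01 : Disjoint F0 F1 := by
    rw [Finset.disjoint_left]
    intro l h0 h1
    have := hmemF0 l h0
    have := (hmemF1 l h1).1
    omega
  have hd2 : Disjoint (F0 ∪ F1) F2 := by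
    rw [Finset.disjoint_left]
    intro l h01 h2
    obtain ⟨hl2a, hl2b, hl2c⟩ := hmemF2 l h2
    rcases Finset.mem_union.mp h01 with h0 | h1
    · have := hmemF0 l h0; omega
    · obtain ⟨hl1a, hl1b, hl1c⟩ := hmemF1 l h1
      refine hdiffe l.length (by omega) (by omega) ?_
      rw [← hl1c, hl2c]
      exact List.take_prefix _ _
  -- injectivity of take
  have hinj_u : ∀ i ∈ range (m + 1), ∀ j ∈ range (m + 1),
      u.take i = u.take j → i = j := by
    intro i hi j hj hij
    rw [Finset.mem_range] at hi hj
    have := congrArg List.length hij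
    rwa [hlen_take_u i (by omega), hlen_take_u j (by omega)] at this
  have hinj_u' : ∀ i ∈ Ico (m + 1) k, ∀ j ∈ Ico (m + 1) k,
      u.take i = u.take j → i = j := by
    intro i hi j hj hij
    rw [Finset.mem_Ico] at hi hj
    have := congrArg List.length hij
    rwa [hlen_take_u i (by omega), hlen_take_u j (by omega)] at this
  have hinj_v' : ∀ i ∈ Ico (m + 1) k, ∀ j ∈ Ico (m + 1) k,
      v.take i = v.take j → i = j := by
    intro i hi j hj hij
    rw [Finset.mem_Ico] at hi hj
    have := congrArg List.length hij
    rwa [hlen_take_v i (by omega), hlen_take_v j (by omega)] at this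
  -- final computation
  rw [step1, step2, step3, hsplit, Finset.prod_union hd2, Finset.prod_union hd01]
  have e0 : ∏ l ∈ F0, q (g l) =
      (∏ i ∈ range m, q (u.getD i 0 + 1)) * q (max (u.getD m 0) (v.getD m 0) + 1) := by
    rw [hF0, Finset.prod_image hinj_u, Finset.prod_range_succ, hg_mid]
    congr 1
    exact Finset.prod_congr rfl fun i hi => by
      rw [hg_shared i (Finset.mem_range.mp hi)]
  have e1 : ∏ l ∈ F1, q (g l) = ∏ i ∈ Ico (m + 1) k, q (u.getD i 0 + 1) := by
    rw [hF1, Finset.prod_image hinj_u']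
    exact Finset.prod_congr rfl fun i hi => by
      rw [Finset.mem_Ico] at hi
      rw [hg_u i (by omega) hi.2]
  have e2 : ∏ l ∈ F2, q (g l) = ∏ i ∈ Ico (m + 1) k, q (v.getD i 0 + 1) := by
    rw [hF2, Finset.prod_image hinj_v']
    exact Finset.prod_congr rfl fun i hi => by
      rw [Finset.mem_Ico] at hi
      rw [hg_v i (by omega) hi.2]
  rw [e0, e1, e2]
  ring

abbrev Param (m r : ℕ) : Type :=
  (Fin m → ℕ) × {pr : ℕ × ℕ // pr.1 ≠ pr.2} × (Fin r → ℕ) × (Fin r → ℕ)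

def mkl (m r : ℕ) (w : Fin m → ℕ) (a : ℕ) (s : Fin r → ℕ) : List ℕ :=
  List.ofFn w ++ a :: List.ofFn s

lemma mkl_length (m r w a s) : (mkl m r w a s).length = m + 1 + r := by
  simp [mkl]; omega

lemma mkl_take (m r w a s) : (mkl m r w a s).take m = List.ofFn w := by
  have h := List.take_left (l₁ := List.ofFn w) (l₂ := a :: List.ofFn s)
  rwa [List.length_ofFn] at h

lemma mkl_getD_lt (m r w a s) (i : ℕ) (hi : i < m) :
    (mkl m r w a s).getD i 0 = w ⟨i, hi⟩ := by
  rw [List.getD_eq_getElem _ 0 (by rw [mkl_length]; omega)]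
  unfold mkl
  rw [List.getElem_append_left (by simp [hi])]
  exact List.getElem_ofFn _

lemma mkl_getD_mid (m r w a s) : (mkl m r w a s).getD m 0 = a := by
  rw [List.getD_eq_getElem _ 0 (by rw [mkl_length]; omega)]
  unfold mkl
  rw [List.getElem_append_right (by simp)]
  simp

lemma mkl_getD_hi (m r w a s) (j : ℕ) (hj : j < r) :
    (mkl m r w a s).getD (m + 1 + j) 0 = s ⟨j, hj⟩ := by
  rw [List.getD_eq_getElem _ 0 (by rw [mkl_length]; omega)]
  unfold mkl
  rw [List.getElem_append_right (by simp; omega)]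
  have : m + 1 + j - (List.ofFn w).length = j + 1 := by simp; omega
  simp only [this]
  simp [List.getElem_ofFn]

lemma mkl_prefix (m r w a s) : (List.ofFn w ++ [a]) <+: mkl m r w a s := by
  have : mkl m r w a s = (List.ofFn w ++ [a]) ++ List.ofFn s := by
    rw [mkl, List.append_assoc]; rfl
  rw [this]
  exact List.prefix_append _ _

/-- recover components from getD's -/
lemma mkl_inj (m r : ℕ) {w w' : Fin m → ℕ} {a a' : ℕ} {s s' : Fin r → ℕ}
    (h : mkl m r w a s = mkl m r w' a' s') : w = w' ∧ a = a' ∧ s = s' := by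
  refine ⟨funext fun i => ?_, ?_, funext fun j => ?_⟩
  · have := congrArg (fun L => L.getD i 0) h
    rwa [mkl_getD_lt m r w a s i i.isLt, mkl_getD_lt m r w' a' s' i i.isLt,
      Fin.eta] at this
  · have := congrArg (fun L => L.getD m 0) h
    rwa [mkl_getD_mid, mkl_getD_mid] at this
  · have := congrArg (fun L => L.getD (m + 1 + j) 0) h
    rwa [mkl_getD_hi m r w a s j j.isLt, mkl_getD_hi m r w' a' s' j j.isLt,
      Fin.eta] at this

def U {m r : ℕ} (p : Param m r) : List ℕ := mkl m r p.1 p.2.1.val.1 p.2.2.1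
def V {m r : ℕ} (p : Param m r) : List ℕ := mkl m r p.1 p.2.1.val.2 p.2.2.2

lemma Phi_inj (m r : ℕ) : Function.Injective (fun p : Param m r => (U p, V p)) := by
  rintro ⟨w, ⟨⟨a, b⟩, hab⟩, s, t⟩ ⟨w', ⟨⟨a', b'⟩, hab'⟩, s', t'⟩ h
  simp only [Prod.mk.injEq] at h
  obtain ⟨h1, h2⟩ := h
  obtain ⟨hw, ha, hs⟩ := mkl_inj m r h1
  obtain ⟨-, hb, ht⟩ := mkl_inj m r h2
  subst hw ha hs hb ht
  rfl

lemma U_ne_V {m r : ℕ} (p : Param m r) : U p ≠ V p := by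
  intro h
  have := congrArg (fun L => L.getD m 0) h
  rw [U, V, mkl_getD_mid, mkl_getD_mid] at this
  exact p.2.1.prop this

lemma U_getD_eq {m r : ℕ} (p : Param m r) (i : ℕ) (hi : i < m) :
    (U p).getD i 0 = (V p).getD i 0 := by
  rw [U, V, mkl_getD_lt m r _ _ _ i hi, mkl_getD_lt m r _ _ _ i hi]

/-- characterization of the pair set -/
lemma set_eq {Ω : Type*} (N : List ℕ → Ω → ℕ) (ω : Ω) (k ℓ : ℕ) (hℓ1 : 1 ≤ ℓ) (hℓk : ℓ ≤ k) :
    {p : List ℕ × List ℕ |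
        p.1.length = k ∧ p.2.length = k ∧ p.1 ≠ p.2 ∧
        memTree N ω p.1 ∧ memTree N ω p.2 ∧
        ∃ w a b, a ≠ b ∧ w.length = k - ℓ ∧
          (w ++ [a]) <+: p.1 ∧ (w ++ [b]) <+: p.2} =
      (fun p : Param (k - ℓ) (ℓ - 1) => (U p, V p)) ''
        {p : Param (k - ℓ) (ℓ - 1) | memTree N ω (U p) ∧ memTree N ω (V p)} := by
  set m := k - ℓ with hm
  set r := ℓ - 1 with hr
  have hk : k = m + 1 + r := by omega
  ext ⟨x, y⟩
  simp only [Set.mem_setOf_eq, Set.mem_image]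
  constructor
  · rintro ⟨hx, hy, hxy, hmx, hmy, w0, a0, b0, hab0, hw0, hp1, hp2⟩
    -- identify a0 b0 with coordinates
    have hxlen : m < x.length := by omega
    have hylen : m < y.length := by omega
    have ha0 : a0 = x[m]'hxlen := by
      have h1 : (w0 ++ [a0])[m]'(by simp [hw0]) = a0 :=
        List.getElem_concat_length (by omega) _
      rw [← h1]
      exact hp1.getElem _
    have hb0 : b0 = y[m]'hylen := by
      have h1 : (w0 ++ [b0])[m]'(by simp [hw0]) = b0 :=
        List.getElem_concat_length (by omega) _
      rw [← h1]
      exact hp2.getElem _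
    have habxy : x.getD m 0 ≠ y.getD m 0 := by
      rw [List.getD_eq_getElem x 0 hxlen, List.getD_eq_getElem y 0 hylen, ← ha0, ← hb0]
      exact hab0
    set p : Param m r := ⟨fun i => x.getD i 0, ⟨(x.getD m 0, y.getD m 0), habxy⟩,
      fun j => x.getD (m + 1 + j) 0, fun j => y.getD (m + 1 + j) 0⟩ with hp
    have hUx : U p = x := by
      apply List.ext_getElem (by rw [U, mkl_length]; omega)
      intro n h1 h2
      rw [← List.getD_eq_getElem _ 0 h1, ← List.getD_eq_getElem x 0 h2, U, hp]
      simp only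
      rcases Nat.lt_trichotomy n m with hn | hn | hn
      · rw [mkl_getD_lt m r _ _ _ n hn]
      · subst hn; rw [mkl_getD_mid]
      · have hnr : n - m - 1 < r := by
          rw [U, mkl_length] at h1; omega
        have hn' : n = m + 1 + (n - m - 1) := by omega
        rw [hn', mkl_getD_hi m r _ _ _ _ hnr]
    have hVy : V p = y := by
      apply List.ext_getElem (by rw [V, mkl_length]; omega)
      intro n h1 h2
      rw [← List.getD_eq_getElem _ 0 h1, ← List.getD_eq_getElem y 0 h2, V, hp]
      simp only
      rcases Nat.lt_trichotomy n m with hn | hn | hn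
      · rw [mkl_getD_lt m r _ _ _ n hn]
        have hw0x : w0 <+: x := (List.prefix_append w0 ([a0])).trans hp1
        have hw0y : w0 <+: y := (List.prefix_append w0 ([b0])).trans hp2
        show x.getD n 0 = y.getD n 0
        rw [List.getD_eq_getElem x 0 (by omega), List.getD_eq_getElem y 0 (by omega)]
        exact (hw0x.getElem (show n < w0.length by omega)).symm.trans
          (hw0y.getElem (show n < w0.length by omega))
      · subst hn; rw [mkl_getD_mid]
      · have hnr : n - m - 1 < r := by
          rw [V, mkl_length] at h1; omega
        have hn' : n = m + 1 + (n - m - 1) := by omega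
        rw [hn', mkl_getD_hi m r _ _ _ _ hnr]
    exact ⟨p, ⟨hUx.symm ▸ hmx, hVy.symm ▸ hmy⟩, by rw [hUx, hVy]⟩
  · rintro ⟨p, ⟨hmu, hmv⟩, heq⟩
    simp only [Prod.mk.injEq] at heq
    obtain ⟨hUx, hVy⟩ := heq
    refine ⟨by rw [← hUx, U, mkl_length]; omega, by rw [← hVy, V, mkl_length]; omega,
      by rw [← hUx, ← hVy]; exact U_ne_V p, hUx ▸ hmu, hVy ▸ hmv,
      List.ofFn p.1, p.2.1.val.1, p.2.1.val.2, p.2.1.prop, by simp, ?_, ?_⟩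
    · rw [← hUx]; exact mkl_prefix m r _ _ _
    · rw [← hVy]; exact mkl_prefix m r _ _ _


lemma memTree_measurable {Ω : Type*} [MeasurableSpace Ω] {N : List ℕ → Ω → ℕ}
    (hNmeas : ∀ v, Measurable (N v)) (u : List ℕ) :
    MeasurableSet {ω | memTree N ω u} := by
  have h : {ω | memTree N ω u} =
      ⋂ (l : List ℕ), ⋂ (a : ℕ), ⋂ (_ : l ++ [a] <+: u), {ω | a < N l ω} := by
    ext ω
    simp only [Set.mem_setOf_eq, Set.mem_iInter, memTree]
  rw [h]
  exact MeasurableSet.iInter fun l => MeasurableSet.iInter fun a =>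
    MeasurableSet.iInter fun _ => hNmeas l MeasurableSpace.measurableSet_top

end GW8

open scoped ENNReal
open Finset

/-- In a Galton–Watson tree with i.i.d. `Poisson(d)` offspring counts, the
expected number of (ordered) pairs of distinct depth-`k` vertices at tree distance exactly
`2ℓ` (i.e. diverging at depth `k − ℓ`) equals `d^(k+ℓ)`, for `1 ≤ ℓ ≤ k`. -/
theorem stmt8 {Ω : Type*} [MeasurableSpace Ω] (μ : Measure Ω) [IsProbabilityMeasure μ]
    (d : ℝ) (hd : 0 < d)
    (N : List ℕ → Ω → ℕ)
    (hNmeas : ∀ v, Measurable (N v))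
    (hNindep : iIndepFun N μ)
    (hNlaw : ∀ v n, μ {ω | N v ω = n} =
      ENNReal.ofReal (Real.exp (-d) * d ^ n / n.factorial))
    (k ℓ : ℕ) (hℓ1 : 1 ≤ ℓ) (hℓk : ℓ ≤ k) :
    ∫ ω, (({p : List ℕ × List ℕ |
        p.1.length = k ∧ p.2.length = k ∧ p.1 ≠ p.2 ∧
        memTree N ω p.1 ∧ memTree N ω p.2 ∧
        ∃ w a b, a ≠ b ∧ w.length = k - ℓ ∧
          (w ++ [a]) <+: p.1 ∧ (w ++ [b]) <+: p.2} : Set (List ℕ × List ℕ)).ncard : ℝ)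
      ∂μ = d ^ (k + ℓ) := by
  classical
  set m := k - ℓ with hm
  set r := ℓ - 1 with hr
  have hk : k = m + 1 + r := by omega
  -- measurability of level sets
  have hmeaseq : ∀ v n, MeasurableSet {ω | N v ω = n} := fun v n =>
    hNmeas v (MeasurableSpace.measurableSet_top (s := {n}))
  have hpo : ∀ v n, μ {ω | N v ω = n} = GW8.pois d n := fun v n => by
    rw [hNlaw]; rfl
  -- total mass one
  have hsum1 : ∑' n, GW8.pois d n = 1 := by
    have hdis : Pairwise (Function.onFun Disjoint fun n => {ω | N [] ω = n}) := by
      intro i j hij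
      rw [Function.onFun, Set.disjoint_left]
      rintro ω hi hj
      simp only [Set.mem_setOf_eq] at hi hj
      exact hij (hi.symm.trans hj)
    have h := MeasureTheory.measure_iUnion (μ := μ) hdis (fun n => hmeaseq [] n)
    have hun : (⋃ n, {ω | N [] ω = n}) = Set.univ := by
      ext ω
      simp only [Set.mem_iUnion, Set.mem_setOf_eq, Set.mem_univ, iff_true]
      exact ⟨N [] ω, rfl⟩
    rw [hun, measure_univ] at h
    calc ∑' n, GW8.pois d n = ∑' n, μ {ω | N [] ω = n} := tsum_congr fun n => (hpo [] n).symm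
      _ = 1 := h.symm
  -- tail probabilities
  set q : ℕ → ℝ≥0∞ := fun c => ∑' j, GW8.pois d (j + c) with hq
  have htail : ∀ v c, μ {ω | c ≤ N v ω} = q c := by
    intro v c
    have hse : {ω | c ≤ N v ω} = ⋃ j, {ω | N v ω = j + c} := by
      ext ω
      simp only [Set.mem_setOf_eq, Set.mem_iUnion]
      constructor
      · intro h; exact ⟨N v ω - c, by omega⟩
      · rintro ⟨j, hj⟩; omega
    have hdis : Pairwise (Function.onFun Disjoint fun j => {ω | N v ω = j + c}) := by
      intro i j hij
      rw [Function.onFun, Set.disjoint_left]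
      rintro ω hi hj
      simp only [Set.mem_setOf_eq] at hi hj
      omega
    rw [hse, MeasureTheory.measure_iUnion hdis (fun j => hmeaseq v (j + c))]
    exact tsum_congr fun j => hpo v (j + c)
  -- events
  set E : GW8.Param m r → Set Ω :=
    fun p => {ω | memTree N ω (GW8.U p) ∧ memTree N ω (GW8.V p)} with hE
  have hEmeas : ∀ p, MeasurableSet (E p) := fun p =>
    (GW8.memTree_measurable hNmeas (GW8.U p)).inter (GW8.memTree_measurable hNmeas (GW8.V p))
  -- per-parameter measure
  have hμE : ∀ p : GW8.Param m r, μ (E p) =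
      (∏ i : Fin m, q (p.1 i + 1)) * (q (max p.2.1.val.1 p.2.1.val.2 + 1) *
        ((∏ j : Fin r, q (p.2.2.1 j + 1)) * (∏ j : Fin r, q (p.2.2.2 j + 1)))) := by
    rintro ⟨w, ⟨⟨a, b⟩, hab⟩, s, t⟩
    rw [hE]
    have hUd : GW8.U (⟨w, ⟨(a, b), hab⟩, s, t⟩ : GW8.Param m r) = GW8.mkl m r w a s := rfl
    have hVd : GW8.V (⟨w, ⟨(a, b), hab⟩, s, t⟩ : GW8.Param m r) = GW8.mkl m r w b t := rfl
    simp only [hUd, hVd]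
    have h := GW8.measure_pair hNindep q htail k m (by omega)
      (GW8.mkl m r w a s) (GW8.mkl m r w b t)
      (by rw [GW8.mkl_length]; omega) (by rw [GW8.mkl_length]; omega)
      (by rw [GW8.mkl_take, GW8.mkl_take])
      (by rw [GW8.mkl_getD_mid, GW8.mkl_getD_mid]; exact hab)
    rw [h]
    have e1 : ∏ i ∈ Finset.range m, q ((GW8.mkl m r w a s).getD i 0 + 1) =
        ∏ i : Fin m, q (w i + 1) := by
      rw [← Fin.prod_univ_eq_prod_range (fun i => q ((GW8.mkl m r w a s).getD i 0 + 1)) m]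
      exact Finset.prod_congr rfl fun i _ => by rw [GW8.mkl_getD_lt m r w a s i i.isLt]
    have e2 : ∀ (c : ℕ) (z : Fin r → ℕ),
        ∏ i ∈ Finset.Ico (m + 1) k, q ((GW8.mkl m r w c z).getD i 0 + 1) =
        ∏ j : Fin r, q (z j + 1) := by
      intro c z
      rw [Finset.prod_Ico_eq_prod_range]
      rw [show k - (m + 1) = r from by omega]
      rw [← Fin.prod_univ_eq_prod_range (fun i => q ((GW8.mkl m r w c z).getD (m + 1 + i) 0 + 1)) r]
      exact Finset.prod_congr rfl fun j _ => by rw [GW8.mkl_getD_hi m r w c z j j.isLt]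
    rw [e1, e2 a s, e2 b t, GW8.mkl_getD_mid, GW8.mkl_getD_mid]
    ring
  -- the three basic sums
  have S1 : ∑' (n : ℕ), q (n + 1) = ENNReal.ofReal d := GW8.sum_tail hd hsum1
  have S2 : ∑' (x : {pr : ℕ × ℕ // pr.1 ≠ pr.2}), q (max x.val.1 x.val.2 + 1) =
      ENNReal.ofReal d * ENNReal.ofReal d := GW8.S2 hd hsum1
  have SP : ∀ n : ℕ, (∑' v : Fin n → ℕ, ∏ i, q (v i + 1)) = ENNReal.ofReal d ^ n := by
    intro n
    rw [GW8.tsum_pi_pow (fun c => q (c + 1)) n, S1]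
  -- total sum
  have hsumE : ∑' p : GW8.Param m r, μ (E p) = ENNReal.ofReal (d ^ (k + ℓ)) := by
    calc ∑' p : GW8.Param m r, μ (E p)
        = ∑' p : GW8.Param m r, (∏ i : Fin m, q (p.1 i + 1)) *
            (q (max p.2.1.val.1 p.2.1.val.2 + 1) *
            ((∏ j : Fin r, q (p.2.2.1 j + 1)) * (∏ j : Fin r, q (p.2.2.2 j + 1)))) :=
          tsum_congr hμE
      _ = ∑' (w : Fin m → ℕ), ∑' (z : {pr : ℕ × ℕ // pr.1 ≠ pr.2} ×
            ((Fin r → ℕ) × (Fin r → ℕ))), (∏ i : Fin m, q (w i + 1)) *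
            (q (max z.1.val.1 z.1.val.2 + 1) *
            ((∏ j : Fin r, q (z.2.1 j + 1)) * (∏ j : Fin r, q (z.2.2 j + 1)))) :=
          ENNReal.tsum_prod (f := fun (w : Fin m → ℕ) (z : {pr : ℕ × ℕ // pr.1 ≠ pr.2} ×
            ((Fin r → ℕ) × (Fin r → ℕ))) => (∏ i : Fin m, q (w i + 1)) *
            (q (max z.1.val.1 z.1.val.2 + 1) *
            ((∏ j : Fin r, q (z.2.1 j + 1)) * (∏ j : Fin r, q (z.2.2 j + 1)))))
      _ = (∑' (w : Fin m → ℕ), ∏ i : Fin m, q (w i + 1)) *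
          (∑' (z : {pr : ℕ × ℕ // pr.1 ≠ pr.2} × ((Fin r → ℕ) × (Fin r → ℕ))),
            q (max z.1.val.1 z.1.val.2 + 1) *
            ((∏ j : Fin r, q (z.2.1 j + 1)) * (∏ j : Fin r, q (z.2.2 j + 1)))) := by
          simp_rw [ENNReal.tsum_mul_left]
          rw [ENNReal.tsum_mul_right]
      _ = (∑' (w : Fin m → ℕ), ∏ i : Fin m, q (w i + 1)) *
          ((∑' (ab : {pr : ℕ × ℕ // pr.1 ≠ pr.2}), q (max ab.val.1 ab.val.2 + 1)) *
            (∑' (st : (Fin r → ℕ) × (Fin r → ℕ)),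
              (∏ j : Fin r, q (st.1 j + 1)) * (∏ j : Fin r, q (st.2 j + 1)))) := by
          congr 1
          rw [ENNReal.tsum_prod (f := fun (ab : {pr : ℕ × ℕ // pr.1 ≠ pr.2})
            (st : (Fin r → ℕ) × (Fin r → ℕ)) => q (max ab.val.1 ab.val.2 + 1) *
            ((∏ j : Fin r, q (st.1 j + 1)) * (∏ j : Fin r, q (st.2 j + 1))))]
          simp_rw [ENNReal.tsum_mul_left]
          rw [ENNReal.tsum_mul_right]
      _ = (∑' (w : Fin m → ℕ), ∏ i : Fin m, q (w i + 1)) *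
          ((∑' (ab : {pr : ℕ × ℕ // pr.1 ≠ pr.2}), q (max ab.val.1 ab.val.2 + 1)) *
            ((∑' (s : Fin r → ℕ), ∏ j : Fin r, q (s j + 1)) *
              (∑' (t : Fin r → ℕ), ∏ j : Fin r, q (t j + 1)))) := by
          congr 2
          rw [ENNReal.tsum_prod (f := fun (s t : Fin r → ℕ) =>
            (∏ j : Fin r, q (s j + 1)) * (∏ j : Fin r, q (t j + 1)))]
          simp_rw [ENNReal.tsum_mul_left]
          rw [ENNReal.tsum_mul_right]
      _ = ENNReal.ofReal d ^ m * ((ENNReal.ofReal d * ENNReal.ofReal d) *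
            (ENNReal.ofReal d ^ r * ENNReal.ofReal d ^ r)) := by
          rw [SP m, SP r, S2]
      _ = ENNReal.ofReal d ^ (m + 2 + (r + r)) := by ring
      _ = ENNReal.ofReal (d ^ (k + ℓ)) := by
          rw [show m + 2 + (r + r) = k + ℓ from by omega, ENNReal.ofReal_pow hd.le]
  -- the counting function
  set g : Ω → ℝ≥0∞ := fun ω => ∑' p : GW8.Param m r, (E p).indicator 1 ω with hgdef
  have hgmeas : Measurable g :=
    Measurable.ennreal_tsum fun p => measurable_one.indicator (hEmeas p)
  have hlg : ∫⁻ ω, g ω ∂μ = ENNReal.ofReal (d ^ (k + ℓ)) := by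
    rw [hgdef]
    rw [MeasureTheory.lintegral_tsum fun p =>
      (measurable_one.indicator (hEmeas p)).aemeasurable]
    calc ∑' p : GW8.Param m r, ∫⁻ ω, (E p).indicator 1 ω ∂μ
        = ∑' p : GW8.Param m r, μ (E p) :=
          tsum_congr fun p => MeasureTheory.lintegral_indicator_one (hEmeas p)
      _ = ENNReal.ofReal (d ^ (k + ℓ)) := hsumE
  have hae : ∀ᵐ ω ∂μ, g ω < ⊤ :=
    MeasureTheory.ae_lt_top hgmeas (by rw [hlg]; exact ENNReal.ofReal_ne_top)
  -- pointwise identification of the count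
  have hset := fun ω => GW8.set_eq N ω k ℓ hℓ1 hℓk
  have hptw : ∀ ω, g ω < ⊤ →
      (({p : List ℕ × List ℕ |
        p.1.length = k ∧ p.2.length = k ∧ p.1 ≠ p.2 ∧
        memTree N ω p.1 ∧ memTree N ω p.2 ∧
        ∃ w a b, a ≠ b ∧ w.length = k - ℓ ∧
          (w ++ [a]) <+: p.1 ∧ (w ++ [b]) <+: p.2} : Set (List ℕ × List ℕ)).ncard : ℝ) =
      (g ω).toReal := by
    intro ω hω
    have hfib : g ω = ∑' (x : {p : GW8.Param m r | ω ∈ E p}), (1 : ℝ≥0∞) := by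
      rw [hgdef, tsum_subtype {p : GW8.Param m r | ω ∈ E p} (fun _ => (1 : ℝ≥0∞))]
      refine tsum_congr fun p => ?_
      simp only [Set.indicator_apply, Set.mem_setOf_eq, Pi.one_apply]
    have hfin : {p : GW8.Param m r | ω ∈ E p}.Finite := by
      by_contra hinf
      haveI : Infinite ↥{p : GW8.Param m r | ω ∈ E p} :=
        Set.infinite_coe_iff.mpr hinf
      rw [hfib, ENNReal.tsum_const_eq_top_of_ne_zero one_ne_zero] at hω
      exact absurd hω (lt_irrefl ⊤)
    haveI := hfin.fintype
    have hcount : g ω = ((Nat.card {p : GW8.Param m r | ω ∈ E p} : ℕ) : ℝ≥0∞) := by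
      rw [hfib, tsum_fintype]
      simp only [Finset.sum_const, Finset.card_univ, nsmul_eq_mul, mul_one,
        Nat.card_eq_fintype_card]
    have hseteq := hset ω
    rw [← hm, ← hr] at hseteq
    rw [hseteq, Set.ncard_image_of_injective _ (GW8.Phi_inj m r), hcount]
    rw [← Nat.card_coe_set_eq, ENNReal.toReal_natCast]
    rfl
  -- assembling the integral
  have heq : (fun ω => (({p : List ℕ × List ℕ |
        p.1.length = k ∧ p.2.length = k ∧ p.1 ≠ p.2 ∧
        memTree N ω p.1 ∧ memTree N ω p.2 ∧
        ∃ w a b, a ≠ b ∧ w.length = k - ℓ ∧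
          (w ++ [a]) <+: p.1 ∧ (w ++ [b]) <+: p.2} : Set (List ℕ × List ℕ)).ncard : ℝ)) =ᵐ[μ]
      (fun ω => (g ω).toReal) := hae.mono fun ω hω => hptw ω hω
  rw [MeasureTheory.integral_congr_ae heq,
    MeasureTheory.integral_toReal hgmeas.aemeasurable hae, hlg,
    ENNReal.toReal_ofReal (by positivity)]
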